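/- (Deterministic MATR guarantee.) Under the setup of the weak-assortativity lemma: S symmetric weakly assortative with gap p_gap and true normalized clustering matrix X₀ with minimum cluster proportion π_min; let Ŝ = S + R; let τ = n·π_min·p_gap. Let Λ = {λ₁,…,λ_T} be a finite set and, for each λ, let X̂_λ be a normalized clustering matrix of a partition into r clusters. Suppose there exists λ₀ ∈ Λ with ⟨Ŝ, X̂_{λ₀}⟩ ≥ ⟨S, X₀⟩ − ε. Then the maximizer λ* = argmax_{λ∈Λ} ⟨Ŝ, X̂_λ⟩ satisfies ‖X̂_{λ*} − X₀‖_F² ≤ (2/τ)·(ε + sup_{X ∈ 𝒳_r} |⟨X, R⟩|), where 𝒳_r is the set of all normalized clustering matrices of partitions of {1,…,n} into r clusters. -/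

import Mathlib

open Matrix BigOperators

/-- Frobenius norm of a real matrix. -/
noncomputable def frob {n m : ℕ} (M : Matrix (Fin n) (Fin m) ℝ) : ℝ :=
  Real.sqrt (∑ i, ∑ j, (M i j) ^ 2)

/-- Membership matrix of the partition given by a cluster assignment `c`. -/
noncomputable def memb {n r : ℕ} (c : Fin n → Fin r) : Matrix (Fin n) (Fin r) ℝ :=
  Matrix.of fun i k => if c i = k then 1 else 0

/-- Normalized clustering matrix `Z (ZᵀZ)⁻¹ Zᵀ` of the assignment `c`. -/
noncomputable def ncm {n r : ℕ} (c : Fin n → Fin r) : Matrix (Fin n) (Fin n) ℝ :=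
  memb c * ((memb c)ᵀ * memb c)⁻¹ * (memb c)ᵀ

/-- Trace inner product `⟨M, N⟩ = trace(MᵀN)`. -/
noncomputable def ip {n : ℕ} (M N : Matrix (Fin n) (Fin n) ℝ) : ℝ :=
  (Mᵀ * N).trace

/-- The set of all normalized clustering matrices of partitions of `{1,…,n}` into `r` clusters. -/
def clusterMatrices (n r : ℕ) : Set (Matrix (Fin n) (Fin n) ℝ) :=
  {X | ∃ c : Fin n → Fin r, Function.Surjective c ∧ X = ncm c}



noncomputable def nkc {n r : ℕ} (c : Fin n → Fin r) (k : Fin r) : ℝ :=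
  ((Finset.univ.filter (fun i => c i = k)).card : ℝ)

lemma nkc_pos {n r : ℕ} {c : Fin n → Fin r} (hc : Function.Surjective c) (k : Fin r) :
    0 < nkc c k := by
  obtain ⟨i, hi⟩ := hc k
  have h1 : i ∈ Finset.univ.filter (fun i => c i = k) := by simp [hi]
  have h2 := Finset.card_pos.mpr ⟨i, h1⟩
  unfold nkc
  exact_mod_cast h2

lemma gram {n r : ℕ} (c : Fin n → Fin r) :
    (memb c)ᵀ * memb c = Matrix.diagonal (nkc c) := by
  ext k l
  simp only [Matrix.mul_apply, memb, Matrix.transpose_apply, Matrix.of_apply,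
    Matrix.diagonal_apply]
  by_cases h : k = l
  · subst h
    simp only [if_pos rfl, nkc, if_true]
    rw [Finset.sum_congr rfl (fun x _ => show (if c x = k then (1:ℝ) else 0) * (if c x = k then 1 else 0) = if c x = k then 1 else 0 by split_ifs <;> ring)]
    rw [Finset.sum_boole]
  · rw [if_neg h]
    apply Finset.sum_eq_zero
    intro i _
    split_ifs with h1 h2 <;> try ring
    exact absurd (h1 ▸ h2) h

lemma gram_inv {n r : ℕ} {c : Fin n → Fin r} (hc : Function.Surjective c) :
    ((memb c)ᵀ * memb c)⁻¹ = Matrix.diagonal (fun k => (nkc c k)⁻¹) := by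
  rw [_root_.gram]
  apply Matrix.inv_eq_right_inv
  rw [Matrix.diagonal_mul_diagonal]
  have : (fun k => nkc c k * (nkc c k)⁻¹) = fun _ => (1:ℝ) := by
    funext k
    exact mul_inv_cancel₀ (ne_of_gt (nkc_pos hc k))
  rw [this, Matrix.diagonal_one]

lemma ncm_apply {n r : ℕ} {c : Fin n → Fin r} (hc : Function.Surjective c) (i j : Fin n) :
    ncm c i j = if c i = c j then (nkc c (c i))⁻¹ else 0 := by
  rw [ncm, gram_inv hc]
  rw [Matrix.mul_apply]
  have : ∀ l, (memb c * Matrix.diagonal fun k => (nkc c k)⁻¹) i l * (memb c)ᵀ l j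
      = if c i = l then (if c j = l then (nkc c l)⁻¹ else 0) else 0 := by
    intro l
    rw [Matrix.mul_diagonal]
    simp only [memb, Matrix.of_apply, Matrix.transpose_apply]
    split_ifs <;> ring
  rw [Finset.sum_congr rfl (fun l _ => this l)]
  rw [Finset.sum_ite_eq Finset.univ (c i)]
  simp only [Finset.mem_univ, if_true]
  by_cases h : c i = c j
  · rw [h]
  · rw [if_neg (fun hh => h hh.symm), if_neg h]

lemma ip_eq {n : ℕ} (M N : Matrix (Fin n) (Fin n) ℝ) :
    ip M N = ∑ i, ∑ j, M i j * N i j := by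
  unfold ip
  rw [Matrix.trace]
  simp only [Matrix.diag_apply, Matrix.mul_apply, Matrix.transpose_apply]
  rw [Finset.sum_comm]

lemma sum_fiber {n r : ℕ} (c : Fin n → Fin r) (f : Fin r → ℝ) :
    ∑ i, f (c i) = ∑ k, nkc c k * f k := by
  rw [← Finset.sum_fiberwise Finset.univ c (fun i => f (c i))]
  apply Finset.sum_congr rfl
  intro k _
  rw [Finset.sum_congr rfl (fun i hi => by
    rw [(Finset.mem_filter.mp hi).2])]
  rw [Finset.sum_const, nsmul_eq_mul, nkc]

lemma ncm_nonneg {n r : ℕ} {c : Fin n → Fin r} (hc : Function.Surjective c) (i j : Fin n) :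
    0 ≤ ncm c i j := by
  rw [ncm_apply hc]
  split_ifs
  · exact inv_nonneg.mpr (le_of_lt (nkc_pos hc (c i)))
  · exact le_refl 0

lemma ncm_row_sum {n r : ℕ} {c : Fin n → Fin r} (hc : Function.Surjective c) (i : Fin n) :
    ∑ j, ncm c i j = 1 := by
  rw [Finset.sum_congr rfl (fun j _ => ncm_apply hc i j)]
  rw [Finset.sum_congr rfl (fun j _ => show (if c i = c j then (nkc c (c i))⁻¹ else 0)
      = if c j = c i then (nkc c (c i))⁻¹ else 0 by simp [eq_comm])]
  rw [← Finset.sum_filter, Finset.sum_const, nsmul_eq_mul]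
  exact mul_inv_cancel₀ (ne_of_gt (nkc_pos hc (c i)))

lemma ncm_sumsq {n r : ℕ} {c : Fin n → Fin r} (hc : Function.Surjective c) :
    ∑ i, ∑ j, (ncm c i j)^2 = r := by
  have inner : ∀ i, ∑ j, (ncm c i j)^2 = (nkc c (c i))⁻¹ := by
    intro i
    have term : ∀ j, (ncm c i j)^2 = if c j = c i then ((nkc c (c i))⁻¹)^2 else 0 := by
      intro j
      rw [ncm_apply hc i j]
      by_cases h : c i = c j
      · rw [if_pos h, if_pos h.symm]
      · rw [if_neg h, if_neg (Ne.symm h)]; norm_num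
    rw [Finset.sum_congr rfl (fun j _ => term j)]
    rw [← Finset.sum_filter, Finset.sum_const, nsmul_eq_mul]
    rw [show ((Finset.univ.filter (fun j => c j = c i)).card : ℝ) = nkc c (c i) from rfl]
    rw [sq]
    rw [← mul_assoc, mul_inv_cancel₀ (ne_of_gt (nkc_pos hc (c i))), one_mul]
  rw [Finset.sum_congr rfl (fun i _ => inner i)]
  rw [sum_fiber c (fun k => (nkc c k)⁻¹)]
  rw [Finset.sum_congr rfl (fun k _ => mul_inv_cancel₀ (ne_of_gt (nkc_pos hc k)))]
  simp

lemma key {n r : ℕ} {c0 c : Fin n → Fin r} (hc0 : Function.Surjective c0)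
    (hc : Function.Surjective c)
    (S : Matrix (Fin n) (Fin n) ℝ) (a : Fin r → ℝ)
    (hblock : ∀ i j, c0 i = c0 j → S i j = a (c0 i))
    {pgap : ℝ} (hpgap : 0 < pgap)
    (hassort : ∀ i j, c0 i ≠ c0 j → S i j ≤ a (c0 i) - pgap)
    {m : ℝ} (hm_le : ∀ k, m ≤ nkc c0 k) (hm_pos : 0 < m) :
    pgap * m * (∑ i, ∑ j, (ncm c i j - ncm c0 i j)^2) / 2 ≤ ip S (ncm c0) - ip S (ncm c) := by
  set w : Fin n → ℝ := fun i => ∑ j, if c0 i = c0 j then 0 else ncm c i j with hw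
  have hw_nonneg : ∀ i, 0 ≤ w i := by
    intro i
    apply Finset.sum_nonneg
    intro j _
    split_ifs
    · exact le_refl 0
    · exact ncm_nonneg hc i j
  have hsame : ∀ i, ∑ j, (if c0 i = c0 j then ncm c i j else 0) = 1 - w i := by
    intro i
    have h1 : ∑ j, ((if c0 i = c0 j then ncm c i j else 0) + (if c0 i = c0 j then 0 else ncm c i j))
        = ∑ j, ncm c i j := by
      apply Finset.sum_congr rfl
      intro j _
      split_ifs <;> ring
    rw [Finset.sum_add_distrib, ncm_row_sum hc] at h1
    simp only [hw]
    linarith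
  -- Step D
  have hD : pgap * (∑ i, w i) ≤ ip S (ncm c0) - ip S (ncm c) := by
    have hdiff : ip S (ncm c0) - ip S (ncm c)
        = ∑ i, ∑ j, S i j * (ncm c0 i j - ncm c i j) := by
      rw [ip_eq, ip_eq, ← Finset.sum_sub_distrib]
      apply Finset.sum_congr rfl
      intro i _
      rw [← Finset.sum_sub_distrib]
      apply Finset.sum_congr rfl
      intro j _
      ring
    have hterm : ∀ i j, a (c0 i) * (ncm c0 i j - ncm c i j)
        + (if c0 i = c0 j then 0 else pgap * ncm c i j)
        ≤ S i j * (ncm c0 i j - ncm c i j) := by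
      intro i j
      by_cases h : c0 i = c0 j
      · rw [hblock i j h, if_pos h, add_zero]
      · have hX0 : ncm c0 i j = 0 := by rw [ncm_apply hc0, if_neg h]
        rw [hX0, if_neg h]
        have hS := hassort i j h
        have hXn := ncm_nonneg hc i j
        nlinarith
    have hgsum : ∑ i, ∑ j, (a (c0 i) * (ncm c0 i j - ncm c i j)
        + (if c0 i = c0 j then 0 else pgap * ncm c i j)) = pgap * ∑ i, w i := by
      rw [Finset.mul_sum]
      apply Finset.sum_congr rfl
      intro i _
      rw [Finset.sum_add_distrib]
      have h1 : ∑ j, a (c0 i) * (ncm c0 i j - ncm c i j) = 0 := by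
        rw [← Finset.mul_sum, Finset.sum_sub_distrib, ncm_row_sum hc0, ncm_row_sum hc]
        ring
      have h2 : ∑ j, (if c0 i = c0 j then (0:ℝ) else pgap * ncm c i j) = pgap * w i := by
        simp only [hw]
        rw [Finset.mul_sum]
        apply Finset.sum_congr rfl
        intro j _
        split_ifs <;> ring
      rw [h1, h2, zero_add]
    calc pgap * ∑ i, w i = ∑ i, ∑ j, (a (c0 i) * (ncm c0 i j - ncm c i j)
          + (if c0 i = c0 j then 0 else pgap * ncm c i j)) := hgsum.symm
      _ ≤ ∑ i, ∑ j, S i j * (ncm c0 i j - ncm c i j) :=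
          Finset.sum_le_sum (fun i _ => Finset.sum_le_sum (fun j _ => hterm i j))
      _ = ip S (ncm c0) - ip S (ncm c) := hdiff.symm
  -- Step E
  set ipX := ∑ i, ∑ j, ncm c0 i j * ncm c i j with hipX
  have hE : m * ((r : ℝ) - ipX) ≤ ∑ i, w i := by
    have hinner : ∀ i, ∑ j, ncm c0 i j * ncm c i j = (nkc c0 (c0 i))⁻¹ * (1 - w i) := by
      intro i
      have h1 : ∀ j, ncm c0 i j * ncm c i j
          = (nkc c0 (c0 i))⁻¹ * (if c0 i = c0 j then ncm c i j else 0) := by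
        intro j
        rw [ncm_apply hc0]
        split_ifs <;> ring
      rw [Finset.sum_congr rfl (fun j _ => h1 j), ← Finset.mul_sum, hsame i]
    have hsum_inv : ∑ i, (nkc c0 (c0 i))⁻¹ = (r : ℝ) := by
      rw [sum_fiber c0 (fun k => (nkc c0 k)⁻¹)]
      rw [Finset.sum_congr rfl (fun k _ => mul_inv_cancel₀ (ne_of_gt (nkc_pos hc0 k)))]
      simp
    have h2 : (r : ℝ) - ipX = ∑ i, (nkc c0 (c0 i))⁻¹ * w i := by
      rw [hipX, Finset.sum_congr rfl (fun i _ => hinner i), ← hsum_inv,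
        ← Finset.sum_sub_distrib]
      apply Finset.sum_congr rfl
      intro i _
      ring
    rw [h2, Finset.mul_sum]
    apply Finset.sum_le_sum
    intro i _
    have hk := nkc_pos hc0 (c0 i)
    have hle : m * (nkc c0 (c0 i))⁻¹ ≤ 1 := by
      rw [← mul_inv_cancel₀ (ne_of_gt hk)]
      exact mul_le_mul_of_nonneg_right (hm_le (c0 i)) (inv_nonneg.mpr (le_of_lt hk))
    calc m * ((nkc c0 (c0 i))⁻¹ * w i) = (m * (nkc c0 (c0 i))⁻¹) * w i := by ring
      _ ≤ 1 * w i := mul_le_mul_of_nonneg_right hle (hw_nonneg i)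
      _ = w i := one_mul _
  -- Step F
  have hF : ∑ i, ∑ j, (ncm c i j - ncm c0 i j)^2 = 2 * (r : ℝ) - 2 * ipX := by
    have expand : ∑ i, ∑ j, (ncm c i j - ncm c0 i j)^2
        = (∑ i, ∑ j, (ncm c i j)^2) + (∑ i, ∑ j, (ncm c0 i j)^2)
          - 2 * ∑ i, ∑ j, ncm c0 i j * ncm c i j := by
      rw [Finset.mul_sum, ← Finset.sum_add_distrib, ← Finset.sum_sub_distrib]
      apply Finset.sum_congr rfl
      intro i _
      rw [Finset.mul_sum, ← Finset.sum_add_distrib, ← Finset.sum_sub_distrib]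
      apply Finset.sum_congr rfl
      intro j _
      ring
    rw [expand, ncm_sumsq hc, ncm_sumsq hc0, ← hipX]
    ring
  rw [hF]
  have := mul_le_mul_of_nonneg_left hE (le_of_lt hpgap)
  nlinarith

theorem stmt14 {n r T : ℕ} (hn : 0 < n) (hr : 0 < r)
    (c0 : Fin n → Fin r) (hc0 : Function.Surjective c0)
    (S R : Matrix (Fin n) (Fin n) ℝ)
    (a : Fin r → ℝ)
    (hblock : ∀ i j, c0 i = c0 j → S i j = a (c0 i))
    (pgap : ℝ) (hpgap : 0 < pgap)
    (hassort : ∀ i j, c0 i ≠ c0 j → S i j ≤ a (c0 i) - pgap)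
    (clam : Fin T → (Fin n → Fin r)) (hclam : ∀ t, Function.Surjective (clam t))
    (ε : ℝ) (tstar : Fin T)
    (hmax : ∀ t, ip (S + R) (ncm (clam t)) ≤ ip (S + R) (ncm (clam tstar)))
    (hexists : ∃ t0 : Fin T, ip (S + R) (ncm (clam t0)) ≥ ip S (ncm c0) - ε) :
    (frob (ncm (clam tstar) - ncm c0)) ^ 2 ≤
      (2 / ((n : ℝ) *
        (Finset.univ.inf' (@Finset.univ_nonempty _ _ (Fin.pos_iff_nonempty.mp hr))
          (fun k => ((Finset.univ.filter (fun i => c0 i = k)).card : ℝ) / n)) * pgap)) *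
      (ε + sSup ((fun X => |ip X R|) '' clusterMatrices n r)) := by
  have hne : (Finset.univ : Finset (Fin r)).Nonempty :=
    @Finset.univ_nonempty _ _ (Fin.pos_iff_nonempty.mp hr)
  set mval : ℝ := Finset.univ.inf' hne (nkc c0) with hmval
  have hnR : (0:ℝ) < (n:ℝ) := by exact_mod_cast hn
  obtain ⟨k0, -, hk0⟩ := Finset.exists_mem_eq_inf' hne (nkc c0)
  have hm_pos : 0 < mval := by rw [hmval, hk0]; exact nkc_pos hc0 k0
  have hm_le : ∀ k, mval ≤ nkc c0 k := fun k => Finset.inf'_le _ (Finset.mem_univ k)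
  -- identify the τ expression
  have hinf : (n : ℝ) *
      (Finset.univ.inf' (@Finset.univ_nonempty _ _ (Fin.pos_iff_nonempty.mp hr))
        (fun k => ((Finset.univ.filter (fun i => c0 i = k)).card : ℝ) / n)) = mval := by
    have heq : Finset.univ.inf' (@Finset.univ_nonempty _ _ (Fin.pos_iff_nonempty.mp hr))
        (fun k => ((Finset.univ.filter (fun i => c0 i = k)).card : ℝ) / n) = mval / n := by
      apply le_antisymm
      · have := Finset.inf'_le (fun k => ((Finset.univ.filter (fun i => c0 i = k)).card : ℝ) / n)
          (Finset.mem_univ k0)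
        calc _ ≤ ((Finset.univ.filter (fun i => c0 i = k0)).card : ℝ) / n := this
          _ = mval / n := by rw [hmval, hk0]; rfl
      · apply Finset.le_inf'
        intro k _
        have h := hm_le k
        unfold nkc at h
        gcongr
    rw [heq]
    field_simp
  rw [hinf]
  -- sup bound
  set A : Set ℝ := (fun X => |ip X R|) '' clusterMatrices n r with hA
  have hfin : (clusterMatrices n r).Finite := by
    apply Set.Finite.subset (Set.finite_range (ncm : (Fin n → Fin r) → _))
    rintro X ⟨c, -, rfl⟩
    exact ⟨c, rfl⟩
  have hAfin : A.Finite := hfin.image _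
  have hmem : |ip (ncm (clam tstar)) R| ∈ A :=
    ⟨ncm (clam tstar), ⟨clam tstar, hclam tstar, rfl⟩, rfl⟩
  have hsup : |ip (ncm (clam tstar)) R| ≤ sSup A := le_csSup hAfin.bddAbove hmem
  -- ip algebra
  have hip_add : ∀ X : Matrix (Fin n) (Fin n) ℝ, ip (S + R) X = ip S X + ip R X := by
    intro X
    simp [ip, Matrix.transpose_add, Matrix.add_mul]
  have hip_comm : ip R (ncm (clam tstar)) = ip (ncm (clam tstar)) R := by
    rw [ip_eq, ip_eq]
    exact Finset.sum_congr rfl fun i _ => Finset.sum_congr rfl fun j _ => mul_comm _ _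
  -- chain
  obtain ⟨t0, ht0⟩ := hexists
  have hchain : ip S (ncm c0) - ip S (ncm (clam tstar)) ≤ ε + sSup A := by
    have h1 := hmax t0
    rw [hip_add, hip_add] at h1
    rw [hip_add] at ht0
    have h2 : ip R (ncm (clam tstar)) ≤ sSup A := by
      calc ip R (ncm (clam tstar)) = ip (ncm (clam tstar)) R := hip_comm
        _ ≤ |ip (ncm (clam tstar)) R| := le_abs_self _
        _ ≤ sSup A := hsup
    linarith
  -- key inequality
  have hkey := key hc0 (hclam tstar) S a hblock hpgap hassort hm_le hm_pos
  -- frobenius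
  have hfr : (frob (ncm (clam tstar) - ncm c0)) ^ 2
      = ∑ i, ∑ j, (ncm (clam tstar) i j - ncm c0 i j)^2 := by
    rw [frob, Real.sq_sqrt]
    · exact Finset.sum_congr rfl fun i _ => Finset.sum_congr rfl fun j _ => by
        rw [Matrix.sub_apply]
    · apply Finset.sum_nonneg
      intro i _
      apply Finset.sum_nonneg
      intro j _
      positivity
  rw [hfr]
  have hpos : 0 < mval * pgap := mul_pos hm_pos hpgap
  rw [div_mul_eq_mul_div, le_div_iff₀ hpos]
  nlinarith [hkey, hchain]
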